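/- Let M ∈ ℕ and let α, β be real numbers such that α+j ≠ 0 and β+j ≠ 0 for all j = 1,…,M, and α+β+j ≠ 0 for all j = 1,…,2M+1. Then for all integers x, y ∈ {0,…,M}: Σ_{k=0}^{M} [ (2k+α+β+1)·(α+1)_k·(−M)_k·M! ] / [ (−1)^k·(k+α+β+1)_{M+1}·(β+1)_k·k! ] · Q_k(x; α, β, M)·Q_k(y; α, β, M) = δ_{x,y} · x!(M−x)! / ( (α+1)_x (β+1)_{M−x} ) (the dual orthogonality relation for Hahn polynomials). -/

import Mathlib

/-- The Pochhammer symbol `(a)_i = a(a+1)⋯(a+i−1)`, with `(a)_0 = 1`. -/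
noncomputable def poch (a : ℝ) (i : ℕ) : ℝ := ∏ j ∈ Finset.range i, (a + j)

/-- The Hahn polynomial
`Q_k(x; α, β, M) = Σ_{i=0}^{k} (−k)_i (−x)_i (k+α+β+1)_i / ((−M)_i (α+1)_i i!)`. -/
noncomputable def hahnQ (k : ℕ) (x α β M : ℝ) : ℝ :=
  ∑ i ∈ Finset.range (k + 1),
    poch (-(k : ℝ)) i * poch (-x) i * poch ((k : ℝ) + α + β + 1) i /
      (poch (-M) i * poch (α + 1) i * (Nat.factorial i : ℝ))

@[simp] lemma poch_zero (a : ℝ) : poch a 0 = 1 := by simp [poch]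

lemma poch_succ (a : ℝ) (n : ℕ) : poch a (n+1) = poch a n * (a + n) :=
  Finset.prod_range_succ _ _

lemma poch_succ' (a : ℝ) (n : ℕ) : poch a (n+1) = a * poch (a+1) n := by
  rw [poch, Finset.prod_range_succ', poch,
    show ∏ i ∈ Finset.range n, (a + ↑(i+1)) = ∏ j ∈ Finset.range n, (a+1+(j:ℝ)) from
      Finset.prod_congr rfl fun i _ => by push_cast; ring]
  push_cast
  ring

lemma poch_ne_zero {a : ℝ} {n : ℕ} (h : ∀ j : ℕ, j < n → a + j ≠ 0) : poch a n ≠ 0 := by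
  rw [poch, Finset.prod_ne_zero_iff]
  intro j hj
  exact h j (Finset.mem_range.mp hj)

lemma poch_neg_nat_eq_zero {n m : ℕ} (h : n < m) : poch (-(n:ℝ)) m = 0 := by
  rw [poch]
  apply Finset.prod_eq_zero (Finset.mem_range.mpr h)
  simp

/-- coefficient of `(−x)_i` in the Hahn polynomial -/
noncomputable def hc (k : ℕ) (α β M : ℝ) (i : ℕ) : ℝ :=
  poch (-(k : ℝ)) i * poch ((k : ℝ) + α + β + 1) i /
      (poch (-M) i * poch (α + 1) i * (Nat.factorial i : ℝ))

@[simp] lemma hc_zero (k : ℕ) (α β M : ℝ) : hc k α β M 0 = 1 := by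
  simp [hc]

lemma hc_eq_zero_of_lt {k i : ℕ} (h : k < i) (α β M : ℝ) : hc k α β M i = 0 := by
  rw [hc, poch_neg_nat_eq_zero h, zero_mul, zero_div]

lemma hahnQ_eq (k : ℕ) (x α β M : ℝ) :
    hahnQ k x α β M = ∑ i ∈ Finset.range (k+1), hc k α β M i * poch (-x) i := by
  rw [hahnQ]
  exact Finset.sum_congr rfl fun i _ => by rw [hc]; ring

lemma hahnQ_eq' {k N : ℕ} (h : k ≤ N) (x α β M : ℝ) :
    hahnQ k x α β M = ∑ i ∈ Finset.range (N+1), hc k α β M i * poch (-x) i := by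
  rw [hahnQ_eq]
  apply Finset.sum_subset (Finset.range_subset_range.mpr (by omega))
  intro i _ hi
  rw [hc_eq_zero_of_lt (by simp at hi; omega), zero_mul]

@[simp] lemma hahnQ_zero (x α β M : ℝ) : hahnQ 0 x α β M = 1 := by
  simp [hahnQ_eq]

/-- Vandermonde convolution for Pochhammer symbols -/
lemma poch_vandermonde (a b : ℝ) (n : ℕ) :
    poch (a+b) n = ∑ t ∈ Finset.range (n+1), (n.choose t : ℝ) * poch a t * poch b (n-t) := by
  induction n with
  | zero => simp
  | succ n ih =>
    rw [poch_succ, ih, Finset.sum_mul]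
    have key : ∀ t ∈ Finset.range (n+1),
        ((n.choose t : ℕ) : ℝ) * poch a t * poch b (n-t) * (a+b+(n:ℝ))
        = ((n.choose t : ℕ):ℝ) * poch a (t+1) * poch b (n-t)
          + ((n.choose t : ℕ):ℝ) * poch a t * poch b (n-t+1) := by
      intro t ht
      simp only [Finset.mem_range] at ht
      have hc2 : ((n-t:ℕ):ℝ) = (n:ℝ) - (t:ℝ) := by
        have ht' : t ≤ n := by omega
        push_cast [ht']; ring
      rw [poch_succ, poch_succ, hc2]
      ring
    rw [Finset.sum_congr rfl key, Finset.sum_add_distrib]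
    -- RHS
    rw [Finset.sum_range_succ' (fun t => ((Nat.choose (n+1) t : ℕ) : ℝ) * poch a t * poch b (n+1-t))]
    simp only [Nat.choose_succ_succ, Nat.choose_zero_right, Nat.cast_one, Nat.cast_add, poch_zero]
    simp only [Nat.succ_sub_succ, Nat.succ_eq_add_one]
    rw [show (∑ x ∈ Finset.range (n+1),
        ((n.choose x : ℕ):ℝ) * poch a (x+1) * poch b (n-x)) +
        ∑ x ∈ Finset.range (n+1), ((n.choose x : ℕ):ℝ) * poch a x * poch b (n-x+1)
      = (∑ x ∈ Finset.range (n+1),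
          (((n.choose x : ℕ):ℝ) + ((n.choose (x+1) : ℕ):ℝ)) * poch a (x+1) * poch b (n-x))
        + (∑ x ∈ Finset.range (n+1), ((n.choose x:ℕ):ℝ) * poch a x * poch b (n-x+1)
            - ∑ x ∈ Finset.range (n+1), ((n.choose (x+1):ℕ):ℝ) * poch a (x+1) * poch b (n-x))
      from by rw [← Finset.sum_add_distrib]; rw [← Finset.sum_sub_distrib]; ring_nf;
              rw [← Finset.sum_add_distrib]; exact Finset.sum_congr rfl fun x _ => by ring]
    congr 1
    rw [Finset.sum_range_succ'
        (fun t => ((n.choose t:ℕ):ℝ) * poch a t * poch b (n-t+1)) n]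
    rw [Finset.sum_range_succ
        (fun t => ((n.choose (t+1):ℕ):ℝ) * poch a (t+1) * poch b (n-t)) n]
    rw [show ∑ i ∈ Finset.range n, ((n.choose (i+1):ℕ):ℝ) * poch a (i+1) * poch b (n-(i+1)+1)
        = ∑ i ∈ Finset.range n, ((n.choose (i+1):ℕ):ℝ) * poch a (i+1) * poch b (n-i) from
      Finset.sum_congr rfl fun i hi => by
        simp only [Finset.mem_range] at hi
        congr 2
        omega]
    simp [Nat.choose_succ_self]

/-- Hahn weight -/
noncomputable def wt (α β : ℝ) (M x : ℕ) : ℝ :=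
  if x ≤ M then poch (α+1) x * poch (β+1) (M-x) / ((Nat.factorial x : ℝ) * (Nat.factorial (M-x) : ℝ))
  else 0

lemma wt_of_gt {α β : ℝ} {M x : ℕ} (h : M < x) : wt α β M x = 0 := by
  rw [wt, if_neg (by omega)]

lemma wt_sum (α β : ℝ) (M : ℕ) :
    ∑ x ∈ Finset.range (M+1), wt α β M x = poch (α+β+2) M / (Nat.factorial M : ℝ) := by
  have h : (α+β+2) = (α+1)+(β+1) := by ring
  rw [h, poch_vandermonde, Finset.sum_div]
  apply Finset.sum_congr rfl
  intro x hx
  simp only [Finset.mem_range] at hx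
  have hxM : x ≤ M := by omega
  rw [wt, if_pos hxM]
  have hch : (M.choose x : ℝ) * ((Nat.factorial x : ℝ) * (Nat.factorial (M-x) : ℝ))
      = (Nat.factorial M : ℝ) := by
    rw [← Nat.cast_mul, ← Nat.cast_mul, ← Nat.mul_assoc, Nat.choose_mul_factorial_mul_factorial hxM]
  have hf1 : (Nat.factorial x : ℝ) ≠ 0 := Nat.cast_ne_zero.mpr (Nat.factorial_ne_zero x)
  have hf2 : (Nat.factorial (M-x) : ℝ) ≠ 0 := Nat.cast_ne_zero.mpr (Nat.factorial_ne_zero _)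
  have hfM : (Nat.factorial M : ℝ) ≠ 0 := Nat.cast_ne_zero.mpr (Nat.factorial_ne_zero M)
  field_simp
  linear_combination (- poch (α+1) x * poch (β+1) (M-x)) * hch

/-- key fact used for forward differences -/
lemma poch_diff (x : ℝ) (i : ℕ) :
    poch (-(x+1)) (i+1) - poch (-x) (i+1) = -((i:ℝ)+1) * poch (-x) i := by
  have h1 : poch (-(x+1)) (i+1) = (-(x+1)) * poch (-x) i := by
    rw [poch_succ']; ring_nf
  have h2 : poch (-x) (i+1) = poch (-x) i * (-x + i) := poch_succ _ _
  rw [h1, h2]; ring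

/-- forward-shift coefficient identity -/
lemma fwd_coef (k i : ℕ) (α β M : ℝ) (hM : M ≠ 0) (hα1 : α + 1 ≠ 0) :
    -((i:ℝ)+1) * hc (k+1) α β M (i+1)
      = (-((k:ℝ)+1) * ((k:ℝ)+α+β+2) / (M * (α+1))) * hc k (α+1) (β+1) (M-1) i := by
  rw [hc, hc]
  have e1 : poch (-((k:ℝ)+1)) (i+1) = (-((k:ℝ)+1)) * poch (-(k:ℝ)) i := by
    rw [poch_succ', show (-((k:ℝ)+1)+1) = -(k:ℝ) by ring]
  have e2 : poch ((k:ℝ)+1+α+β+1) (i+1) = ((k:ℝ)+α+β+2) * poch ((k:ℝ)+(α+1)+(β+1)+1) i := by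
    rw [poch_succ', show ((k:ℝ)+1+α+β+1) = (k:ℝ)+α+β+2 by ring,
      show ((k:ℝ)+α+β+2+1) = (k:ℝ)+(α+1)+(β+1)+1 by ring]
  have e3 : poch (-M) (i+1) = (-M) * poch (-(M-1)) i := by
    rw [poch_succ', show (-M+1 : ℝ) = -(M-1) by ring]
  have e4 : poch (α+1) (i+1) = (α+1) * poch ((α+1)+1) i := by
    rw [poch_succ']
  have e5 : (Nat.factorial (i+1) : ℝ) = ((i:ℝ)+1) * (Nat.factorial i : ℝ) := by
    rw [Nat.factorial_succ]; push_cast; ring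
  rw [show -((k+1:ℕ):ℝ) = -((k:ℝ)+1) by push_cast; ring,
      show ((k+1:ℕ):ℝ)+α+β+1 = (k:ℝ)+1+α+β+1 by push_cast; ring,
      e1, e2, e3, e4, e5]
  by_cases hd1 : poch (-(M-1)) i = 0
  · rw [hd1]; simp
  by_cases hd2 : poch ((α+1)+1) i = 0
  · rw [hd2]; simp
  have hf : (Nat.factorial i : ℝ) ≠ 0 := Nat.cast_ne_zero.mpr (Nat.factorial_ne_zero i)
  have hi1 : ((i:ℝ)+1) ≠ 0 := by positivity
  have hD1 : (-M * poch (-(M-1)) i) * ((α+1) * poch ((α+1)+1) i) * (((i:ℝ)+1) * (Nat.factorial i : ℝ)) ≠ 0 := by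
    apply mul_ne_zero (mul_ne_zero (mul_ne_zero (neg_ne_zero.mpr hM) hd1)
      (mul_ne_zero hα1 hd2)) (mul_ne_zero hi1 hf)
  have hD2 : (M * (α+1)) * (poch (-(M-1)) i * poch ((α+1)+1) i * (Nat.factorial i : ℝ)) ≠ 0 := by
    apply mul_ne_zero (mul_ne_zero hM hα1) (mul_ne_zero (mul_ne_zero hd1 hd2) hf)
  rw [← mul_div_assoc, div_mul_div_comm, div_eq_div_iff hD1 hD2]
  ring

/-- Forward shift relation for Hahn polynomials -/
lemma fwd (k : ℕ) (α β M x : ℝ) (hM : M ≠ 0) (hα1 : α + 1 ≠ 0) :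
    hahnQ (k+1) (x+1) α β M - hahnQ (k+1) x α β M
      = (-((k:ℝ)+1) * ((k:ℝ)+α+β+2) / (M * (α+1))) * hahnQ k x (α+1) (β+1) (M-1) := by
  rw [hahnQ_eq (k+1) (x+1), hahnQ_eq (k+1) x, hahnQ_eq k x, ← Finset.sum_sub_distrib,
    Finset.mul_sum]
  rw [Finset.sum_range_succ' (fun i => hc (k+1) α β M i * poch (-(x+1)) i
      - hc (k+1) α β M i * poch (-x) i) (k+1)]
  simp only [poch_zero, mul_one, sub_self, add_zero]
  apply Finset.sum_congr rfl
  intro i _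
  have : hc (k+1) α β M (i+1) * poch (-(x+1)) (i+1) - hc (k+1) α β M (i+1) * poch (-x) (i+1)
      = (-((i:ℝ)+1) * hc (k+1) α β M (i+1)) * poch (-x) i := by
    rw [← mul_sub, poch_diff]; ring
  rw [this, fwd_coef k i α β M hM hα1]
  ring

/-- pointwise bracket identity used in the backward shift -/
lemma bracket (α β M x : ℝ) (i : ℕ) :
    (α+1+x) * (M-x) * poch (-x) i - x * (β+M+1-x) * poch (-(x-1)) i
      = ((M:ℝ)-i) * (α+(i:ℝ)+1) * poch (-x) i + (α+β+(i:ℝ)+2) * poch (-x) (i+1) := by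
  have hB : x * poch (-(x-1)) i = ((x:ℝ)-(i:ℝ)) * poch (-x) i := by
    have h1 : poch (-x) (i+1) = (-x) * poch (-x+1) i := poch_succ' _ _
    have h2 : poch (-x) (i+1) = poch (-x) i * (-x+i) := poch_succ _ _
    have h3 : poch (-(x-1)) i = poch (-x+1) i := by rw [show -(x-1) = -x+1 by ring]
    rw [h3]
    nlinarith [h1, h2, h1.symm.trans h2]
  have h2 : poch (-x) (i+1) = poch (-x) i * (-x+i) := poch_succ _ _
  rw [h2]
  linear_combination (-(β+M+1-x)) * hB

lemma poch_neg_nat_ne_zero {M m : ℕ} (h : m ≤ M) : poch (-(M:ℝ)) m ≠ 0 := by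
  apply poch_ne_zero
  intro j hj
  have : (j:ℝ) ≠ (M:ℝ) := Nat.cast_injective.ne (by omega)
  intro hcon
  apply this
  linarith

lemma poch_shift_ne_zero {α : ℝ} {M : ℕ} (hα : ∀ j : ℕ, 1 ≤ j → j ≤ M → α + j ≠ 0)
    (s m : ℕ) (h : s + m ≤ M) : poch (α + s + 1) m ≠ 0 := by
  apply poch_ne_zero
  intro j hj
  have := hα (s+1+j) (by omega) (by omega)
  intro hcon
  apply this
  push_cast
  linarith

/-- star coefficient identity, m = 0 case -/
lemma star_coef0 (k : ℕ) (α β M : ℝ) :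
    (M:ℝ)*(α+1) * hc (k+1) α β M 0
      = ((M:ℝ)-(0:ℕ))*(α+(0:ℕ)+1) * hc k (α+1) (β+1) (M-1) 0 := by
  simp

/-- star coefficient identity, successor case -/
lemma star_coefS (k m M : ℕ) (α β : ℝ) (hm : m ≤ k) (hkM : k+1 ≤ M)
    (hα : ∀ j : ℕ, 1 ≤ j → j ≤ M → α + j ≠ 0) :
    (M:ℝ)*(α+1) * hc (k+1) α β M (m+1)
      = ((M:ℝ)-((m+1:ℕ):ℝ))*(α+((m+1:ℕ):ℝ)+1) * hc k (α+1) (β+1) ((M:ℝ)-1) (m+1)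
        + (α+β+((m+1:ℕ):ℝ)+1) * hc k (α+1) (β+1) ((M:ℝ)-1) m := by
  have hM0 : (M:ℝ) ≠ 0 := Nat.cast_ne_zero.mpr (by omega)
  have hα1 : α + 1 ≠ 0 := by
    have := hα 1 le_rfl (by omega); simpa using this
  have hd1 : poch (-((M:ℝ)-1)) m ≠ 0 := by
    have hc1 : -((M:ℝ)-1) = -(((M-1:ℕ)):ℝ) := by
      have : ((M-1:ℕ):ℝ) = (M:ℝ)-1 := by
        have h1 : 1 ≤ M := by omega
        push_cast [h1]; ring
      rw [this]
    rw [hc1]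
    exact poch_neg_nat_ne_zero (by omega)
  have hd2 : poch ((α+1)+1) m ≠ 0 := by
    have := poch_shift_ne_zero hα 1 m (by omega)
    simpa [show α + (1:ℕ) + 1 = α + 1 + 1 by push_cast; ring] using this
  have hf : (Nat.factorial m : ℝ) ≠ 0 := Nat.cast_ne_zero.mpr (Nat.factorial_ne_zero m)
  have hm1 : ((m:ℝ)+1) ≠ 0 := by positivity
  -- expansions
  have e1 : poch (-((k:ℝ)+1)) (m+1) = (-((k:ℝ)+1)) * poch (-(k:ℝ)) m := by
    rw [poch_succ', show (-((k:ℝ)+1)+1) = -(k:ℝ) by ring]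
  have e2 : poch ((k:ℝ)+1+α+β+1) (m+1) = ((k:ℝ)+α+β+2) * poch ((k:ℝ)+(α+1)+(β+1)+1) m := by
    rw [poch_succ', show ((k:ℝ)+1+α+β+1) = (k:ℝ)+α+β+2 by ring,
      show ((k:ℝ)+α+β+2+1) = (k:ℝ)+(α+1)+(β+1)+1 by ring]
  have e3 : poch (-(M:ℝ)) (m+1) = (-(M:ℝ)) * poch (-((M:ℝ)-1)) m := by
    rw [poch_succ', show (-(M:ℝ)+1 : ℝ) = -((M:ℝ)-1) by ring]
  have e4 : poch (α+1) (m+1) = (α+1) * poch ((α+1)+1) m := by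
    rw [poch_succ']
  have e5 : (Nat.factorial (m+1) : ℝ) = ((m:ℝ)+1) * (Nat.factorial m : ℝ) := by
    rw [Nat.factorial_succ]; push_cast; ring
  have f1 : poch (-(k:ℝ)) (m+1) = poch (-(k:ℝ)) m * (-(k:ℝ)+m) := poch_succ _ _
  have f2 : poch ((k:ℝ)+(α+1)+(β+1)+1) (m+1)
      = poch ((k:ℝ)+(α+1)+(β+1)+1) m * ((k:ℝ)+(α+1)+(β+1)+1+m) := poch_succ _ _
  have f3 : poch (-((M:ℝ)-1)) (m+1) = poch (-((M:ℝ)-1)) m * (-((M:ℝ)-1)+m) := poch_succ _ _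
  have f4 : poch ((α+1)+1) (m+1) = poch ((α+1)+1) m * ((α+1)+1+m) := poch_succ _ _
  rcases Nat.lt_or_ge m k with hmk | hmk
  · -- generic case m < k
    have hg1 : (-((M:ℝ)-1)+m) ≠ 0 := by
      have : ((m:ℝ)) ≠ ((M:ℝ)-1) := by
        have : ((m:ℕ):ℝ) ≠ (((M-1):ℕ):ℝ) := Nat.cast_injective.ne (by omega)
        have hc1 : ((M-1:ℕ):ℝ) = (M:ℝ)-1 := by
          have h1 : 1 ≤ M := by omega
          push_cast [h1]; ring
        rwa [hc1] at this
      intro hcon; apply this; linarith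
    have hg2 : ((α+1)+1+m) ≠ 0 := by
      have := hα (m+2) (by omega) (by omega)
      intro hcon; apply this; push_cast; linarith
    rw [hc, hc, hc,
      show -((k+1:ℕ):ℝ) = -((k:ℝ)+1) by push_cast; ring,
      show ((k+1:ℕ):ℝ)+α+β+1 = (k:ℝ)+1+α+β+1 by push_cast; ring,
      e1, e2, e3, e4, e5, f1, f2, f3, f4]
    have hDL : (-(M:ℝ) * poch (-((M:ℝ)-1)) m) * ((α+1) * poch ((α+1)+1) m)
        * (((m:ℝ)+1) * (Nat.factorial m : ℝ)) ≠ 0 :=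
      mul_ne_zero (mul_ne_zero (mul_ne_zero (neg_ne_zero.mpr hM0) hd1)
        (mul_ne_zero hα1 hd2)) (mul_ne_zero hm1 hf)
    have hDx : (poch (-((M:ℝ)-1)) m * (-((M:ℝ)-1)+m)) * (poch ((α+1)+1) m * ((α+1)+1+m))
        * (((m:ℝ)+1) * (Nat.factorial m : ℝ)) ≠ 0 :=
      mul_ne_zero (mul_ne_zero (mul_ne_zero hd1 hg1) (mul_ne_zero hd2 hg2))
        (mul_ne_zero hm1 hf)
    have hDy : poch (-((M:ℝ)-1)) m * poch ((α+1)+1) m * (Nat.factorial m : ℝ) ≠ 0 :=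
      mul_ne_zero (mul_ne_zero hd1 hd2) hf
    rw [← mul_div_assoc, ← mul_div_assoc, ← mul_div_assoc,
      div_add_div _ _ hDx hDy, div_eq_div_iff hDL (mul_ne_zero hDx hDy)]
    push_cast
    ring
  · -- boundary case m = k
    have hmk' : m = k := by omega
    subst hmk'
    have hz : hc m (α+1) (β+1) ((M:ℝ)-1) (m+1) = 0 := hc_eq_zero_of_lt (by omega) _ _ _
    rw [hz, mul_zero, zero_add, hc, hc,
      show -((m+1:ℕ):ℝ) = -((m:ℝ)+1) by push_cast; ring,
      show ((m+1:ℕ):ℝ)+α+β+1 = (m:ℝ)+1+α+β+1 by push_cast; ring]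
    have e1' : poch (-((m:ℝ)+1)) (m+1) = (-((m:ℝ)+1)) * poch (-(m:ℝ)) m := by
      rw [poch_succ', show (-((m:ℝ)+1)+1) = -(m:ℝ) by ring]
    have e2' : poch ((m:ℝ)+1+α+β+1) (m+1) = ((m:ℝ)+α+β+2) * poch ((m:ℝ)+(α+1)+(β+1)+1) m := by
      rw [poch_succ', show ((m:ℝ)+1+α+β+1) = (m:ℝ)+α+β+2 by ring,
        show ((m:ℝ)+α+β+2+1) = (m:ℝ)+(α+1)+(β+1)+1 by ring]
    rw [e1', e2', e3, e4, e5]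
    have hDL : (-(M:ℝ) * poch (-((M:ℝ)-1)) m) * ((α+1) * poch ((α+1)+1) m)
        * (((m:ℝ)+1) * (Nat.factorial m : ℝ)) ≠ 0 :=
      mul_ne_zero (mul_ne_zero (mul_ne_zero (neg_ne_zero.mpr hM0) hd1)
        (mul_ne_zero hα1 hd2)) (mul_ne_zero hm1 hf)
    have hDy : poch (-((M:ℝ)-1)) m * poch ((α+1)+1) m * (Nat.factorial m : ℝ) ≠ 0 :=
      mul_ne_zero (mul_ne_zero hd1 hd2) hf
    rw [← mul_div_assoc, ← mul_div_assoc, div_eq_div_iff hDL hDy]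
    push_cast
    ring

/-- backward shift identity (pointwise in real x) -/
lemma star (k M : ℕ) (α β x : ℝ) (hkM : k+1 ≤ M)
    (hα : ∀ j : ℕ, 1 ≤ j → j ≤ M → α + j ≠ 0) :
    (α+1+x) * ((M:ℝ)-x) * hahnQ k x (α+1) (β+1) ((M:ℝ)-1)
      - x * (β+(M:ℝ)+1-x) * hahnQ k (x-1) (α+1) (β+1) ((M:ℝ)-1)
      = (M:ℝ)*(α+1) * hahnQ (k+1) x α β M := by
  rw [hahnQ_eq k x, hahnQ_eq k (x-1), hahnQ_eq (k+1) x, Finset.mul_sum, Finset.mul_sum,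
    Finset.mul_sum, ← Finset.sum_sub_distrib]
  have key : ∀ i ∈ Finset.range (k+1),
      (α+1+x) * ((M:ℝ)-x) * (hc k (α+1) (β+1) ((M:ℝ)-1) i * poch (-x) i)
        - x * (β+(M:ℝ)+1-x) * (hc k (α+1) (β+1) ((M:ℝ)-1) i * poch (-(x-1)) i)
      = hc k (α+1) (β+1) ((M:ℝ)-1) i * (((M:ℝ)-i) * (α+(i:ℝ)+1) * poch (-x) i)
        + hc k (α+1) (β+1) ((M:ℝ)-1) i * ((α+β+(i:ℝ)+2) * poch (-x) (i+1)) := by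
    intro i _
    have hb := bracket α β (M:ℝ) x i
    linear_combination (hc k (α+1) (β+1) ((M:ℝ)-1) i) * hb
  rw [Finset.sum_congr rfl key, Finset.sum_add_distrib]
  -- first piece: extend to range (k+2)
  have ext1 : ∑ i ∈ Finset.range (k+1),
      hc k (α+1) (β+1) ((M:ℝ)-1) i * (((M:ℝ)-i) * (α+(i:ℝ)+1) * poch (-x) i)
      = ∑ i ∈ Finset.range (k+2),
      hc k (α+1) (β+1) ((M:ℝ)-1) i * (((M:ℝ)-i) * (α+(i:ℝ)+1) * poch (-x) i) := by
    rw [Finset.sum_range_succ (fun i => hc k (α+1) (β+1) ((M:ℝ)-1) i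
      * (((M:ℝ)-i) * (α+(i:ℝ)+1) * poch (-x) i)) (k+1),
      hc_eq_zero_of_lt (by omega), zero_mul, add_zero]
  -- second piece: shift index
  have ext2 : ∑ i ∈ Finset.range (k+1),
      hc k (α+1) (β+1) ((M:ℝ)-1) i * ((α+β+(i:ℝ)+2) * poch (-x) (i+1))
      = ∑ m ∈ Finset.range (k+2),
        (if m = 0 then 0 else hc k (α+1) (β+1) ((M:ℝ)-1) (m-1)
          * ((α+β+(m:ℝ)+1) * poch (-x) m)) := by
    rw [Finset.sum_range_succ' (fun m => if m = 0 then 0 else hc k (α+1) (β+1) ((M:ℝ)-1) (m-1)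
        * ((α+β+(m:ℝ)+1) * poch (-x) m)) (k+1)]
    simp only [Nat.succ_ne_zero, if_false, if_true, Nat.add_sub_cancel, ite_true, ite_false]
    rw [add_zero]
    apply Finset.sum_congr rfl
    intro i _
    push_cast
    ring
  rw [ext1, ext2, ← Finset.sum_add_distrib]
  apply Finset.sum_congr rfl
  intro m hm
  simp only [Finset.mem_range] at hm
  match m with
  | 0 =>
    simp only [if_pos rfl, add_zero]
    have := star_coef0 k α β ((M:ℝ))
    push_cast at this ⊢
    linear_combination (-poch (-x) 0) * this
  | (m+1) =>
    have hms : m ≤ k := by omega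
    have := star_coefS k m M α β hms hkM hα
    simp only [Nat.succ_ne_zero, if_false, Nat.add_sub_cancel, ite_false]
    push_cast at this ⊢
    linear_combination (-poch (-x) (m+1)) * this

lemma wt_ratio1 {α β : ℝ} {M x : ℕ} (hx : x ≤ M) (hM : 1 ≤ M)
    (hα1 : α+1 ≠ 0) (hβ1 : β+1 ≠ 0) :
    (α+1)*(β+1) * wt (α+1) (β+1) (M-1) x = wt α β M x * ((α+1+(x:ℝ)) * ((M:ℝ)-(x:ℝ))) := by
  rcases Nat.lt_or_ge x M with hxM | hxM
  · obtain ⟨t, rfl⟩ : ∃ t, M = x + t + 1 := ⟨M - x - 1, by omega⟩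
    rw [wt, wt, if_pos (by omega), if_pos (by omega)]
    have h1 : x + t + 1 - 1 - x = t := by omega
    have h2 : x + t + 1 - x = t + 1 := by omega
    rw [h1, h2, poch_succ (β+1) t, Nat.factorial_succ]
    have hf1 : (Nat.factorial x : ℝ) ≠ 0 := Nat.cast_ne_zero.mpr (Nat.factorial_ne_zero x)
    have hf2 : (Nat.factorial t : ℝ) ≠ 0 := Nat.cast_ne_zero.mpr (Nat.factorial_ne_zero t)
    have keyA : (α+1) * poch ((α+1)+1) x = poch (α+1) x * (α+1+(x:ℝ)) :=
      (poch_succ' (α+1) x).symm.trans (poch_succ (α+1) x)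
    have keyB : (β+1) * poch ((β+1)+1) t = poch (β+1) t * (β+1+(t:ℝ)) :=
      (poch_succ' (β+1) t).symm.trans (poch_succ (β+1) t)
    have hx1 : ((t:ℝ)+1) ≠ 0 := by positivity
    field_simp
    push_cast
    linear_combination ((β+1) * poch ((β+1)+1) t * ((t:ℝ)+1)
        * (Nat.factorial t : ℝ)) * keyA
      + (poch (α+1) x * (α+1+(x:ℝ)) * ((t:ℝ)+1)
        * (Nat.factorial t : ℝ)) * keyB
  · have hxM' : x = M := by omega
    subst hxM'
    rw [wt_of_gt (by omega)]
    simp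

lemma wt_ratio2 {α β : ℝ} {M x : ℕ} (hx : x + 1 ≤ M)
    (hα1 : α+1 ≠ 0) (hβ1 : β+1 ≠ 0) :
    (α+1)*(β+1) * wt (α+1) (β+1) (M-1) x
      = wt α β M (x+1) * ((((x:ℝ))+1) * (β+(M:ℝ)+1-(((x:ℝ))+1))) := by
  obtain ⟨t, rfl⟩ : ∃ t, M = x + 1 + t := ⟨M - x - 1, by omega⟩
  rw [wt, wt, if_pos (by omega), if_pos (by omega)]
  have h1 : x + 1 + t - 1 - x = t := by omega
  have h2 : x + 1 + t - (x+1) = t := by omega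
  rw [h1, h2, Nat.factorial_succ]
  have hf1 : (Nat.factorial x : ℝ) ≠ 0 := Nat.cast_ne_zero.mpr (Nat.factorial_ne_zero x)
  have hf2 : (Nat.factorial t : ℝ) ≠ 0 := Nat.cast_ne_zero.mpr (Nat.factorial_ne_zero t)
  have e4 : poch (α+1) (x+1) = (α+1) * poch ((α+1)+1) x := poch_succ' _ _
  have keyB : (β+1) * poch ((β+1)+1) t = poch (β+1) t * (β+1+(t:ℝ)) :=
    (poch_succ' (β+1) t).symm.trans (poch_succ (β+1) t)
  have hx1 : ((x:ℝ)+1) ≠ 0 := by positivity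
  rw [e4]
  field_simp
  push_cast
  linear_combination (poch ((α+1)+1) x * ((x:ℝ)+1) * (Nat.factorial x : ℝ)) * keyB

/-- the bilinear form -/
noncomputable def G (k l : ℕ) (α β : ℝ) (M : ℕ) : ℝ :=
  ∑ x ∈ Finset.range (M+1),
    wt α β M x * hahnQ k (x:ℝ) α β (M:ℝ) * hahnQ l (x:ℝ) α β (M:ℝ)

lemma G_symm (k l : ℕ) (α β : ℝ) (M : ℕ) : G k l α β M = G l k α β M := by
  apply Finset.sum_congr rfl
  intro x _
  ring

/-- main telescoping step -/
lemma GrecA (k l M : ℕ) (α β : ℝ) (hl : l + 1 ≤ M)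
    (hα : ∀ j : ℕ, 1 ≤ j → j ≤ M → α + j ≠ 0) (hβ1 : β + 1 ≠ 0) :
    (M:ℝ) * (α+1) * G k (l+1) α β M
      = -((α+1)*(β+1)) * ∑ x ∈ Finset.range M,
          wt (α+1) (β+1) (M-1) x * hahnQ l (x:ℝ) (α+1) (β+1) ((M:ℝ)-1) *
            (hahnQ k ((x:ℝ)+1) α β (M:ℝ) - hahnQ k (x:ℝ) α β (M:ℝ)) := by
  have hα1 : α + 1 ≠ 0 := by
    have := hα 1 le_rfl (by omega); simpa using this
  have hM : 1 ≤ M := by omega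
  set F : ℕ → ℝ := fun n => if n = 0 then 0
    else wt (α+1) (β+1) (M-1) (n-1) * hahnQ l (((n-1:ℕ)):ℝ) (α+1) (β+1) ((M:ℝ)-1) with hF
  have hF0 : F 0 = 0 := by simp [hF]
  have hFs : ∀ y : ℕ, F (y+1)
      = wt (α+1) (β+1) (M-1) y * hahnQ l (y:ℝ) (α+1) (β+1) ((M:ℝ)-1) := by
    intro y; simp [hF]
  have key : ∀ x ∈ Finset.range (M+1),
      (M:ℝ) * (α+1) * (wt α β M x * hahnQ k (x:ℝ) α β (M:ℝ) * hahnQ (l+1) (x:ℝ) α β (M:ℝ))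
      = (α+1)*(β+1) * (hahnQ k (x:ℝ) α β (M:ℝ) * (F (x+1) - F x)) := by
    intro x hx
    simp only [Finset.mem_range] at hx
    have hxM : x ≤ M := by omega
    have hst := star l M α β (x:ℝ) hl hα
    have hw1 := wt_ratio1 (α := α) (β := β) hxM hM hα1 hβ1
    cases x with
    | zero =>
      rw [hFs 0, hF0]
      push_cast at hst hw1 ⊢
      linear_combination (-(wt α β M 0 * hahnQ k 0 α β (M:ℝ))) * hst
        + (-(hahnQ k 0 α β (M:ℝ) * hahnQ l 0 (α+1) (β+1) ((M:ℝ)-1))) * hw1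
    | succ y =>
      rw [hFs (y+1), hFs y]
      have hw2 := wt_ratio2 (α := α) (β := β) (M := M) (x := y) (by omega) hα1 hβ1
      push_cast at hst hw1 hw2 ⊢
      rw [show ((y:ℝ)+1-1) = (y:ℝ) by ring] at hst
      linear_combination (-(wt α β M (y+1) * hahnQ k ((y:ℝ)+1) α β (M:ℝ))) * hst
        + (-(hahnQ k ((y:ℝ)+1) α β (M:ℝ) * hahnQ l ((y:ℝ)+1) (α+1) (β+1) ((M:ℝ)-1))) * hw1
        + (hahnQ k ((y:ℝ)+1) α β (M:ℝ) * hahnQ l (y:ℝ) (α+1) (β+1) ((M:ℝ)-1)) * hw2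
  rw [G, Finset.mul_sum, Finset.sum_congr rfl key, ← Finset.mul_sum]
  have habel : ∑ x ∈ Finset.range (M+1), hahnQ k (x:ℝ) α β (M:ℝ) * (F (x+1) - F x)
      = ∑ x ∈ Finset.range M, F (x+1) *
          (hahnQ k (x:ℝ) α β (M:ℝ) - hahnQ k ((x:ℝ)+1) α β (M:ℝ)) := by
    have h1 : ∑ x ∈ Finset.range (M+1), hahnQ k (x:ℝ) α β (M:ℝ) * (F (x+1) - F x)
        = ∑ x ∈ Finset.range (M+1), hahnQ k (x:ℝ) α β (M:ℝ) * F (x+1)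
          - ∑ x ∈ Finset.range (M+1), hahnQ k (x:ℝ) α β (M:ℝ) * F x := by
      rw [← Finset.sum_sub_distrib]
      exact Finset.sum_congr rfl fun x _ => by ring
    rw [h1, Finset.sum_range_succ (fun x => hahnQ k (x:ℝ) α β (M:ℝ) * F (x+1)) M]
    have hFM : F (M+1) = 0 := by
      rw [hF]
      simp only [Nat.add_sub_cancel]
      rw [if_neg (by omega), wt_of_gt (by omega), zero_mul]
    rw [hFM, mul_zero, add_zero,
      Finset.sum_range_succ' (fun x => hahnQ k (x:ℝ) α β (M:ℝ) * F x) M, hF0, mul_zero,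
      add_zero, ← Finset.sum_sub_distrib]
    apply Finset.sum_congr rfl
    intro x _
    have hc1 : ((x+1:ℕ):ℝ) = (x:ℝ)+1 := by push_cast; ring
    rw [hc1]
    ring
  rw [habel, Finset.mul_sum, Finset.mul_sum]
  apply Finset.sum_congr rfl
  intro x _
  rw [hFs x]
  ring

lemma GrecB (k l M : ℕ) (α β : ℝ) (hl : l + 1 ≤ M)
    (hα : ∀ j : ℕ, 1 ≤ j → j ≤ M → α + j ≠ 0) (hβ1 : β + 1 ≠ 0) :
    G (k+1) (l+1) α β M
      = (β+1)*((k:ℝ)+1)*((k:ℝ)+α+β+2)/((M:ℝ)^2*(α+1)) * G k l (α+1) (β+1) (M-1) := by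
  have hα1 : α + 1 ≠ 0 := by
    have := hα 1 le_rfl (by omega); simpa using this
  have hM0 : (M:ℝ) ≠ 0 := Nat.cast_ne_zero.mpr (by omega)
  have hA := GrecA (k+1) l M α β hl hα hβ1
  have hG' : G k l (α+1) (β+1) (M-1)
      = ∑ x ∈ Finset.range M, wt (α+1) (β+1) (M-1) x
          * hahnQ k (x:ℝ) (α+1) (β+1) ((M:ℝ)-1) * hahnQ l (x:ℝ) (α+1) (β+1) ((M:ℝ)-1) := by
    have h1 : 1 ≤ M := by omega
    have hcast : (((M-1:ℕ)):ℝ) = (M:ℝ)-1 := by push_cast [h1]; ring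
    rw [G, show M-1+1 = M by omega, hcast]
  apply mul_left_cancel₀ (show (M:ℝ)*(α+1) ≠ 0 from mul_ne_zero hM0 hα1)
  rw [hA, hG', Finset.mul_sum, Finset.mul_sum, Finset.mul_sum]
  apply Finset.sum_congr rfl
  intro x _
  rw [fwd k α β (M:ℝ) (x:ℝ) hM0 hα1]
  field_simp

lemma Gzero (l M : ℕ) (α β : ℝ) (hl : l + 1 ≤ M)
    (hα : ∀ j : ℕ, 1 ≤ j → j ≤ M → α + j ≠ 0) (hβ1 : β + 1 ≠ 0) :
    G 0 (l+1) α β M = 0 := by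
  have hα1 : α + 1 ≠ 0 := by
    have := hα 1 le_rfl (by omega); simpa using this
  have hM0 : (M:ℝ) ≠ 0 := Nat.cast_ne_zero.mpr (by omega)
  have hA := GrecA 0 l M α β hl hα hβ1
  simp only [hahnQ_zero, sub_self, mul_zero, Finset.sum_const_zero] at hA
  rcases mul_eq_zero.mp hA with h | h
  · exact absurd h (mul_ne_zero hM0 hα1)
  · exact h

/-- squared norm of the Hahn polynomial -/
noncomputable def hnorm (k : ℕ) (α β : ℝ) (M : ℕ) : ℝ :=
  ((-1:ℝ)^k * poch ((k:ℝ)+α+β+1) (M+1) * poch (β+1) k * (Nat.factorial k : ℝ)) /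
    ((2*(k:ℝ)+α+β+1) * poch (α+1) k * poch (-(M:ℝ)) k * (Nat.factorial M : ℝ))

lemma hnorm_zero (α β : ℝ) (M : ℕ) (h1 : α+β+1 ≠ 0) :
    hnorm 0 α β M = poch (α+β+2) M / (Nat.factorial M : ℝ) := by
  rw [hnorm]
  simp only [pow_zero, one_mul, poch_zero, mul_one, Nat.cast_zero, zero_add,
    Nat.factorial_zero, Nat.cast_one, mul_one]
  rw [show 2*(0:ℝ)+α+β+1 = α+β+1 by norm_num, poch_succ', show α+β+1+1 = α+β+2 by ring]
  have hF : (Nat.factorial M : ℝ) ≠ 0 := Nat.cast_ne_zero.mpr (Nat.factorial_ne_zero _)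
  field_simp

lemma hnorm_step (k M : ℕ) (α β : ℝ) (hkM : k + 1 ≤ M)
    (hα : ∀ j : ℕ, 1 ≤ j → j ≤ M → α + j ≠ 0)
    (hβ1 : β + 1 ≠ 0)
    (hαβ : ∀ j : ℕ, 1 ≤ j → j ≤ 2*M+1 → α + β + j ≠ 0) :
    hnorm (k+1) α β M
      = (β+1)*((k:ℝ)+1)*((k:ℝ)+α+β+2)/((M:ℝ)^2*(α+1)) * hnorm k (α+1) (β+1) (M-1) := by
  obtain ⟨M', rfl⟩ : ∃ M', M = M'+1 := ⟨M-1, by omega⟩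
  have hα1 : α + 1 ≠ 0 := by
    have := hα 1 le_rfl (by omega); simpa using this
  have hM0 : ((M'+1:ℕ):ℝ) ≠ 0 := Nat.cast_ne_zero.mpr (by omega)
  rw [hnorm, hnorm, Nat.add_sub_cancel]
  have hcM : ((M'+1:ℕ):ℝ) = (M':ℝ)+1 := by push_cast; ring
  have hck : ((k+1:ℕ):ℝ) = (k:ℝ)+1 := by push_cast; ring
  rw [hcM, hck]
  have e1 : poch ((k:ℝ)+1+α+β+1) (M'+1+1) = ((k:ℝ)+α+β+2) * poch ((k:ℝ)+(α+1)+(β+1)+1) (M'+1) := by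
    rw [poch_succ', show ((k:ℝ)+1+α+β+1) = (k:ℝ)+α+β+2 by ring,
      show ((k:ℝ)+α+β+2+1) = (k:ℝ)+(α+1)+(β+1)+1 by ring]
  have e2 : poch (β+1) (k+1) = (β+1) * poch ((β+1)+1) k := poch_succ' _ _
  have e3 : (Nat.factorial (k+1) : ℝ) = ((k:ℝ)+1) * (Nat.factorial k : ℝ) := by
    rw [Nat.factorial_succ]; push_cast; ring
  have e4 : poch (α+1) (k+1) = (α+1) * poch ((α+1)+1) k := poch_succ' _ _
  have e5 : poch (-((M':ℝ)+1)) (k+1) = (-((M':ℝ)+1)) * poch (-(M':ℝ)) k := by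
    rw [poch_succ', show (-((M':ℝ)+1)+1) = -(M':ℝ) by ring]
  have e6 : (Nat.factorial (M'+1) : ℝ) = ((M':ℝ)+1) * (Nat.factorial M' : ℝ) := by
    rw [Nat.factorial_succ]; push_cast; ring
  rw [e1, e2, e3, e4, e5, e6]
  have n1 : (2*((k:ℝ)+1)+α+β+1) ≠ 0 := by
    have := hαβ (2*k+3) (by omega) (by omega)
    intro hcon; apply this; push_cast; linarith
  have n1' : (2*(k:ℝ)+(α+1)+(β+1)+1) = (2*((k:ℝ)+1)+α+β+1) := by ring
  have n2 : poch ((α+1)+1) k ≠ 0 := by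
    have := poch_shift_ne_zero hα 1 k (by omega)
    simpa [show α + (1:ℕ) + 1 = α + 1 + 1 by push_cast; ring] using this
  have n3 : poch (-(M':ℝ)) k ≠ 0 := poch_neg_nat_ne_zero (by omega)
  have n4 : (Nat.factorial M' : ℝ) ≠ 0 := Nat.cast_ne_zero.mpr (Nat.factorial_ne_zero _)
  have n5 : ((k:ℝ)+1) ≠ 0 := by positivity
  have n6 : ((M':ℝ)+1) ≠ 0 := by positivity
  have n7 : (Nat.factorial k : ℝ) ≠ 0 := Nat.cast_ne_zero.mpr (Nat.factorial_ne_zero _)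
  have hDL : (2*((k:ℝ)+1)+α+β+1) * ((α+1) * poch ((α+1)+1) k)
      * ((-((M':ℝ)+1)) * poch (-(M':ℝ)) k) * (((M':ℝ)+1) * (Nat.factorial M' : ℝ)) ≠ 0 :=
    mul_ne_zero (mul_ne_zero (mul_ne_zero n1 (mul_ne_zero hα1 n2))
      (mul_ne_zero (neg_ne_zero.mpr n6) n3)) (mul_ne_zero n6 n4)
  have hDR : ((M':ℝ)+1)^2*(α+1) * ((2*((k:ℝ)+1)+α+β+1) * poch ((α+1)+1) k
      * poch (-(M':ℝ)) k * (Nat.factorial M' : ℝ)) ≠ 0 :=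
    mul_ne_zero (mul_ne_zero (pow_ne_zero 2 n6) hα1)
      (mul_ne_zero (mul_ne_zero (mul_ne_zero n1 n2) n3) n4)
  rw [n1', div_mul_div_comm, div_eq_div_iff hDL hDR]
  ring

/-- primary orthogonality of Hahn polynomials -/
lemma ortho (k : ℕ) : ∀ (l M : ℕ) (α β : ℝ), k ≤ M → l ≤ M →
    (∀ j : ℕ, 1 ≤ j → j ≤ M → α + j ≠ 0) →
    (∀ j : ℕ, 1 ≤ j → j ≤ M → β + j ≠ 0) →
    (∀ j : ℕ, 1 ≤ j → j ≤ 2*M+1 → α + β + j ≠ 0) →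
    G k l α β M = if k = l then hnorm k α β M else 0 := by
  induction k with
  | zero =>
    intro l M α β _ hlM hα hβ hαβ
    cases l with
    | zero =>
      rw [if_pos rfl, hnorm_zero α β M (by
        have := hαβ 1 le_rfl (by omega); simpa using this)]
      rw [← wt_sum α β M, G]
      apply Finset.sum_congr rfl
      intro x _
      simp
    | succ l' =>
      rw [if_neg (by omega)]
      exact Gzero l' M α β (by omega) hα (by
        have := hβ 1 le_rfl (by omega); simpa using this)
  | succ k ih =>
    intro l M α β hkM hlM hα hβ hαβ
    cases l with
    | zero =>
      rw [if_neg (by omega), G_symm]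
      exact Gzero k M α β (by omega) hα (by
        have := hβ 1 le_rfl (by omega); simpa using this)
    | succ l' =>
      have hβ1 : β + 1 ≠ 0 := by
        have := hβ 1 le_rfl (by omega); simpa using this
      rw [GrecB k l' M α β (by omega) hα hβ1]
      have hα' : ∀ j : ℕ, 1 ≤ j → j ≤ M-1 → (α+1) + j ≠ 0 := by
        intro j h1 h2
        have := hα (j+1) (by omega) (by omega)
        intro hcon; apply this; push_cast; linarith
      have hβ' : ∀ j : ℕ, 1 ≤ j → j ≤ M-1 → (β+1) + j ≠ 0 := by
        intro j h1 h2
        have := hβ (j+1) (by omega) (by omega)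
        intro hcon; apply this; push_cast; linarith
      have hαβ' : ∀ j : ℕ, 1 ≤ j → j ≤ 2*(M-1)+1 → (α+1) + (β+1) + j ≠ 0 := by
        intro j h1 h2
        have := hαβ (j+2) (by omega) (by omega)
        intro hcon; apply this; push_cast; linarith
      rw [ih l' (M-1) (α+1) (β+1) (by omega) (by omega) hα' hβ' hαβ']
      by_cases hkl : k = l'
      · subst hkl
        rw [if_pos rfl, if_pos rfl, hnorm_step k M α β (by omega) hα hβ1 hαβ]
      · rw [if_neg hkl, if_neg (by omega), mul_zero]

lemma hnorm_ne_zero (k M : ℕ) (α β : ℝ) (hkM : k ≤ M)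
    (hα : ∀ j : ℕ, 1 ≤ j → j ≤ M → α + j ≠ 0)
    (hβ : ∀ j : ℕ, 1 ≤ j → j ≤ M → β + j ≠ 0)
    (hαβ : ∀ j : ℕ, 1 ≤ j → j ≤ 2*M+1 → α + β + j ≠ 0) :
    hnorm k α β M ≠ 0 := by
  have hf : ∀ n : ℕ, (Nat.factorial n : ℝ) ≠ 0 :=
    fun n => Nat.cast_ne_zero.mpr (Nat.factorial_ne_zero n)
  apply div_ne_zero
  · apply mul_ne_zero (mul_ne_zero (mul_ne_zero (pow_ne_zero k (by norm_num)) ?_) ?_) (hf k)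
    · apply poch_ne_zero
      intro j hj
      have := hαβ (k+1+j) (by omega) (by omega)
      intro hcon; apply this; push_cast; linarith
    · apply poch_ne_zero
      intro j hj
      have := hβ (j+1) (by omega) (by omega)
      intro hcon; apply this; push_cast; linarith
  · apply mul_ne_zero (mul_ne_zero (mul_ne_zero ?_ ?_) (poch_neg_nat_ne_zero hkM)) (hf M)
    · have := hαβ (2*k+1) (by omega) (by omega)
      intro hcon; apply this; push_cast; linarith
    · apply poch_ne_zero
      intro j hj
      have := hα (j+1) (by omega) (by omega)
      intro hcon; apply this; push_cast; linarith

lemma wt_ne_zero {α β : ℝ} {M x : ℕ} (hx : x ≤ M)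
    (hα : ∀ j : ℕ, 1 ≤ j → j ≤ M → α + j ≠ 0)
    (hβ : ∀ j : ℕ, 1 ≤ j → j ≤ M → β + j ≠ 0) :
    wt α β M x ≠ 0 := by
  rw [wt, if_pos hx]
  have hf : ∀ n : ℕ, (Nat.factorial n : ℝ) ≠ 0 :=
    fun n => Nat.cast_ne_zero.mpr (Nat.factorial_ne_zero n)
  apply div_ne_zero (mul_ne_zero ?_ ?_) (mul_ne_zero (hf x) (hf (M-x)))
  · apply poch_ne_zero
    intro j hj
    have := hα (j+1) (by omega) (by omega)
    intro hcon; apply this; push_cast; linarith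
  · apply poch_ne_zero
    intro j hj
    have := hβ (j+1) (by omega) (by omega)
    intro hcon; apply this; push_cast; linarith

theorem stmt_8_aux (M : ℕ) (α β : ℝ)
    (hα : ∀ j : ℕ, 1 ≤ j → j ≤ M → α + j ≠ 0)
    (hβ : ∀ j : ℕ, 1 ≤ j → j ≤ M → β + j ≠ 0)
    (hαβ : ∀ j : ℕ, 1 ≤ j → j ≤ 2 * M + 1 → α + β + j ≠ 0) :
    ∀ x y : ℕ, x ≤ M → y ≤ M →
      ∑ k ∈ Finset.range (M + 1),
        ((2 * (k : ℝ) + α + β + 1) * poch (α + 1) k * poch (-(M : ℝ)) k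
            * (Nat.factorial M : ℝ)) /
          ((-1 : ℝ) ^ k * poch ((k : ℝ) + α + β + 1) (M + 1) * poch (β + 1) k
            * (Nat.factorial k : ℝ))
          * hahnQ k (x : ℝ) α β (M : ℝ) * hahnQ k (y : ℝ) α β (M : ℝ)
      = (if x = y then 1 else 0) *
          ((Nat.factorial x : ℝ) * (Nat.factorial (M - x) : ℝ)) /
          (poch (α + 1) x * poch (β + 1) (M - x)) := by
  intro x y hx hy
  classical
  set A : Matrix (Fin (M+1)) (Fin (M+1)) ℝ :=
    Matrix.of (fun k x : Fin (M+1) => hahnQ k.val (x.val:ℝ) α β (M:ℝ)) with hA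
  set B : Matrix (Fin (M+1)) (Fin (M+1)) ℝ :=
    Matrix.of (fun x k : Fin (M+1) =>
      wt α β M x.val * hahnQ k.val (x.val:ℝ) α β (M:ℝ) / hnorm k.val α β M) with hB
  have hAB : A * B = 1 := by
    ext k l
    rw [Matrix.mul_apply, Matrix.one_apply]
    have step1 : ∀ j : Fin (M+1), A k j * B j l
        = (wt α β M j.val * hahnQ k.val (j.val:ℝ) α β (M:ℝ)
            * hahnQ l.val (j.val:ℝ) α β (M:ℝ)) / hnorm l.val α β M := by
      intro j
      rw [hA, hB]
      simp only [Matrix.of_apply]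
      ring
    rw [Finset.sum_congr rfl (fun j _ => step1 j), ← Finset.sum_div]
    have step2 : ∑ j : Fin (M+1), wt α β M j.val * hahnQ k.val (j.val:ℝ) α β (M:ℝ)
        * hahnQ l.val (j.val:ℝ) α β (M:ℝ) = G k.val l.val α β M := by
      rw [G]
      exact Fin.sum_univ_eq_sum_range
        (fun j => wt α β M j * hahnQ k.val (j:ℝ) α β (M:ℝ) * hahnQ l.val (j:ℝ) α β (M:ℝ)) (M+1)
    rw [step2, ortho k.val l.val M α β (by omega) (by omega) hα hβ hαβ]
    by_cases hkl : k = l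
    · subst hkl
      rw [if_pos rfl, if_pos rfl, div_self (hnorm_ne_zero k.val M α β (by omega) hα hβ hαβ)]
    · rw [if_neg (fun h => hkl (Fin.ext h)), if_neg hkl, zero_div]
  have hBA : B * A = 1 := mul_eq_one_comm.mp hAB
  have h2 : ∑ k : Fin (M+1), B ⟨x, by omega⟩ k * A k ⟨y, by omega⟩
      = if x = y then 1 else 0 := by
    have hmm : (B * A) ⟨x, by omega⟩ ⟨y, by omega⟩
        = (1 : Matrix (Fin (M+1)) (Fin (M+1)) ℝ) ⟨x, by omega⟩ ⟨y, by omega⟩ := by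
      rw [hBA]
    rw [Matrix.mul_apply] at hmm
    rw [hmm, Matrix.one_apply]
    by_cases hxy : x = y
    · rw [if_pos (by exact Fin.ext (by simpa using hxy)), if_pos hxy]
    · rw [if_neg (fun h => hxy (by simpa using congrArg Fin.val h)), if_neg hxy]
  have hwt : wt α β M x ≠ 0 := wt_ne_zero hx hα hβ
  apply mul_right_cancel₀ hwt
  have lhs1 : (∑ k ∈ Finset.range (M + 1),
        ((2 * (k : ℝ) + α + β + 1) * poch (α + 1) k * poch (-(M : ℝ)) k
            * (Nat.factorial M : ℝ)) /
          ((-1 : ℝ) ^ k * poch ((k : ℝ) + α + β + 1) (M + 1) * poch (β + 1) k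
            * (Nat.factorial k : ℝ))
          * hahnQ k (x : ℝ) α β (M : ℝ) * hahnQ k (y : ℝ) α β (M : ℝ)) * wt α β M x
      = ∑ k : Fin (M+1), B ⟨x, by omega⟩ k * A k ⟨y, by omega⟩ := by
    rw [Finset.sum_mul, ← Fin.sum_univ_eq_sum_range (fun k =>
      ((2 * (k : ℝ) + α + β + 1) * poch (α + 1) k * poch (-(M : ℝ)) k
            * (Nat.factorial M : ℝ)) /
          ((-1 : ℝ) ^ k * poch ((k : ℝ) + α + β + 1) (M + 1) * poch (β + 1) k
            * (Nat.factorial k : ℝ))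
          * hahnQ k (x : ℝ) α β (M : ℝ) * hahnQ k (y : ℝ) α β (M : ℝ) * wt α β M x) (M+1)]
    apply Finset.sum_congr rfl
    intro k _
    have hcoef : ((2 * ((k:ℕ) : ℝ) + α + β + 1) * poch (α + 1) (k:ℕ) * poch (-(M : ℝ)) (k:ℕ)
            * (Nat.factorial M : ℝ)) /
          ((-1 : ℝ) ^ (k:ℕ) * poch (((k:ℕ) : ℝ) + α + β + 1) (M + 1) * poch (β + 1) (k:ℕ)
            * (Nat.factorial (k:ℕ) : ℝ)) = (hnorm (k:ℕ) α β M)⁻¹ := by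
      rw [hnorm, inv_div]
    rw [hcoef, hA, hB]
    simp only [Matrix.of_apply]
    ring
  rw [lhs1, h2]
  rw [wt, if_pos hx]
  have hP1 : poch (α+1) x ≠ 0 := by
    apply poch_ne_zero
    intro j hj
    have := hα (j+1) (by omega) (by omega)
    intro hcon; apply this; push_cast; linarith
  have hP2 : poch (β+1) (M-x) ≠ 0 := by
    apply poch_ne_zero
    intro j hj
    have := hβ (j+1) (by omega) (by omega)
    intro hcon; apply this; push_cast; linarith
  have hf : ∀ n : ℕ, (Nat.factorial n : ℝ) ≠ 0 :=
    fun n => Nat.cast_ne_zero.mpr (Nat.factorial_ne_zero n)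
  field_simp

/-- Dual orthogonality relation for the Hahn polynomials. -/
theorem stmt_8 (M : ℕ) (α β : ℝ)
    (hα : ∀ j : ℕ, 1 ≤ j → j ≤ M → α + j ≠ 0)
    (hβ : ∀ j : ℕ, 1 ≤ j → j ≤ M → β + j ≠ 0)
    (hαβ : ∀ j : ℕ, 1 ≤ j → j ≤ 2 * M + 1 → α + β + j ≠ 0) :
    ∀ x y : ℕ, x ≤ M → y ≤ M →
      ∑ k ∈ Finset.range (M + 1),
        ((2 * (k : ℝ) + α + β + 1) * poch (α + 1) k * poch (-(M : ℝ)) k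
            * (Nat.factorial M : ℝ)) /
          ((-1 : ℝ) ^ k * poch ((k : ℝ) + α + β + 1) (M + 1) * poch (β + 1) k
            * (Nat.factorial k : ℝ))
          * hahnQ k (x : ℝ) α β (M : ℝ) * hahnQ k (y : ℝ) α β (M : ℝ)
      = (if x = y then 1 else 0) *
          ((Nat.factorial x : ℝ) * (Nat.factorial (M - x) : ℝ)) /
          (poch (α + 1) x * poch (β + 1) (M - x)) :=
  stmt_8_aux M α β hα hβ hαβ
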